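/- For any twice continuously differentiable functions f, φ : ℝ → ℝ, the identity 2 f² φ φ'' + (φ (f²φ)' − f²φφ')' = 2 (fφ (fφ)')' − 2 ((fφ)')² + 2 φ² (f')² holds pointwise. -/

import Mathlib

theorem stmt_0 (f φ : ℝ → ℝ) (hf : ContDiff ℝ 2 f) (hφ : ContDiff ℝ 2 φ) :
    ∀ x : ℝ,
      2 * (f x)^2 * φ x * deriv (deriv φ) x
        + deriv (fun l => φ l * deriv (fun m => (f m)^2 * φ m) l
            - (f l)^2 * φ l * deriv φ l) x
      = 2 * deriv (fun l => f l * φ l * deriv (fun m => f m * φ m) l) x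
        - 2 * (deriv (fun l => f l * φ l) x)^2
        + 2 * (φ x)^2 * (deriv f x)^2 := by
  have hf1 : Differentiable ℝ f := hf.differentiable (by norm_num)
  have hφ1 : Differentiable ℝ φ := hφ.differentiable (by norm_num)
  have hdf : Differentiable ℝ (deriv f) :=
    (contDiff_succ_iff_deriv.mp (by rw [one_add_one_eq_two]; exact_mod_cast hf : ContDiff ℝ (1+1 : WithTop ℕ∞) f)).2.2.differentiable (by norm_num)
  have hdφ : Differentiable ℝ (deriv φ) :=
    (contDiff_succ_iff_deriv.mp (by rw [one_add_one_eq_two]; exact_mod_cast hφ : ContDiff ℝ (1+1 : WithTop ℕ∞) φ)).2.2.differentiable (by norm_num)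
  intro x
  have e1 : (fun l => φ l * deriv (fun m => (f m)^2 * φ m) l
      - (f l)^2 * φ l * deriv φ l) = fun l => 2 * f l * deriv f l * (φ l)^2 := by
    funext l
    have h : deriv (fun m => (f m)^2 * φ m) l
        = (2 * f l ^ 1 * deriv f l) * φ l + (f l)^2 * deriv φ l := by
      rw [deriv_fun_mul ((hf1 l).fun_pow 2) (hφ1 l), deriv_fun_pow (hf1 l) 2]
      norm_num
    rw [h]; ring
  have e2 : (fun l => f l * φ l * deriv (fun m => f m * φ m) l)
      = fun l => f l * φ l * (deriv f l * φ l + f l * deriv φ l) := by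
    funext l
    rw [deriv_fun_mul (hf1 l) (hφ1 l)]
  have efφ : deriv (fun l => f l * φ l) x = deriv f x * φ x + f x * deriv φ x :=
    deriv_mul (hf1 x) (hφ1 x)
  rw [e1, e2, efφ]
  have d1 : deriv (fun l => 2 * f l * deriv f l * (φ l)^2) x
      = (2 * deriv f x * deriv f x + 2 * f x * deriv (deriv f) x) * (φ x)^2
        + 2 * f x * deriv f x * (2 * φ x ^ 1 * deriv φ x) := by
    rw [deriv_fun_mul (((differentiable_const 2).fun_mul hf1).fun_mul hdf x) ((hφ1 x).fun_pow 2),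
      deriv_fun_mul ((differentiable_const 2).fun_mul hf1 x) (hdf x),
      deriv_const_mul 2 (hf1 x), deriv_fun_pow (hφ1 x) 2]
    norm_num
  have d2 : deriv (fun l => f l * φ l * (deriv f l * φ l + f l * deriv φ l)) x
      = (deriv f x * φ x + f x * deriv φ x) * (deriv f x * φ x + f x * deriv φ x)
        + f x * φ x * ((deriv (deriv f) x * φ x + deriv f x * deriv φ x)
          + (deriv f x * deriv φ x + f x * deriv (deriv φ) x)) := by
    rw [deriv_fun_mul ((hf1.fun_mul hφ1) x) (((hdf.fun_mul hφ1).fun_add (hf1.fun_mul hdφ)) x),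
      deriv_fun_mul (hf1 x) (hφ1 x),
      deriv_fun_add ((hdf.fun_mul hφ1) x) ((hf1.fun_mul hdφ) x),
      deriv_fun_mul (hdf x) (hφ1 x), deriv_fun_mul (hf1 x) (hdφ x)]
  rw [d1, d2]; ring
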